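/- Let k ≥ 1 and let g : ℝ → ℝ be defined by g(x) = Σ_{m=0}^{k} 2|β_m| cos(m x + θ_m), where β_0,…,β_k ∈ ℂ, θ_m = arg(β_m), and at least one β_j with j ≥ 1 is nonzero. Then for every x ∈ ℝ there exists i with 1 ≤ i ≤ 4k such that the i-th derivative g^{(i)}(x) ≠ 0. -/

import Mathlib

open Complex Finset

private lemma hasDerivAt_cexp_mul (a : ℂ) (y : ℝ) :
    HasDerivAt (fun t : ℝ => Complex.exp (a * t)) (a * Complex.exp (a * y)) y := by
  have h := ((hasDerivAt_id ((y : ℝ) : ℂ)).const_mul a).cexp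
  simpa [mul_comm] using h.comp_ofReal

private lemma iter_formula (s : Finset ℕ) (a b c d : ℕ → ℂ) : ∀ n : ℕ,
    iteratedDeriv n (fun y : ℝ =>
      (∑ m ∈ s, (c m * Complex.exp (a m * y) + d m * Complex.exp (b m * y))).re)
    = fun y : ℝ =>
      (∑ m ∈ s, ((a m) ^ n * c m * Complex.exp (a m * y)
        + (b m) ^ n * d m * Complex.exp (b m * y))).re := by
  intro n
  induction n with
  | zero => simp
  | succ n ih =>
    rw [iteratedDeriv_succ, ih]
    funext y
    have hsum : HasDerivAt (fun y : ℝ =>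
        ∑ m ∈ s, ((a m) ^ n * c m * Complex.exp (a m * y)
          + (b m) ^ n * d m * Complex.exp (b m * y)))
        (∑ m ∈ s, ((a m) ^ (n+1) * c m * Complex.exp (a m * y)
          + (b m) ^ (n+1) * d m * Complex.exp (b m * y))) y := by
      apply HasDerivAt.fun_sum
      intro m _
      have h1 := (hasDerivAt_cexp_mul (a m) y).const_mul ((a m) ^ n * c m)
      have h2 := (hasDerivAt_cexp_mul (b m) y).const_mul ((b m) ^ n * d m)
      have := h1.fun_add h2
      convert this using 1
      ring
    have := Complex.reCLM.hasFDerivAt.comp_hasDerivAt y hsum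
    exact this.deriv

theorem trig_poly_some_derivative_nonzero
    (k : ℕ) (hk : 1 ≤ k) (β : ℕ → ℂ)
    (hβ : ∃ j, 1 ≤ j ∧ j ≤ k ∧ β j ≠ 0)
    (g : ℝ → ℝ)
    (hg : g = fun x => ∑ m ∈ Finset.range (k + 1),
      2 * ‖β m‖ * Real.cos ((m : ℝ) * x + (β m).arg)) :
    ∀ x : ℝ, ∃ i, 1 ≤ i ∧ i ≤ 4 * k ∧ iteratedDeriv i g x ≠ 0 := by
  intro x
  by_contra hcon
  push_neg at hcon
  -- rewrite g in complex exponential form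
  set a : ℕ → ℂ := fun m => Complex.I * m with ha
  set b : ℕ → ℂ := fun m => -(Complex.I * m) with hb
  set d : ℕ → ℂ := fun m => (starRingEnd ℂ) (β m) with hd
  have hg' : g = fun y : ℝ =>
      (∑ m ∈ Finset.range (k + 1),
        (β m * Complex.exp (a m * y) + d m * Complex.exp (b m * y))).re := by
    rw [hg]
    funext y
    rw [Complex.re_sum]
    apply Finset.sum_congr rfl
    intro m _
    have hconj : d m * Complex.exp (b m * y)
        = (starRingEnd ℂ) (β m * Complex.exp (a m * y)) := by
      rw [map_mul, ← Complex.exp_conj]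
      simp [ha, hb, hd, map_mul, Complex.conj_I]
    rw [hconj, Complex.add_conj, Complex.ofReal_re]
    have hβm : β m * Complex.exp (a m * y)
        = ((‖β m‖ : ℝ) : ℂ) * Complex.exp (((m : ℝ) * y + (β m).arg : ℝ) * Complex.I) := by
      conv_lhs => rw [← Complex.norm_mul_exp_arg_mul_I (β m)]
      rw [mul_assoc, ← Complex.exp_add]
      congr 1
      push_cast [ha]
      ring
    rw [hβm, Complex.re_ofReal_mul, Complex.exp_ofReal_mul_I_re]
    ring
  -- closed form for the iterated derivatives
  have hiter : ∀ i : ℕ, iteratedDeriv i g x =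
      (∑ m ∈ Finset.range (k + 1),
        ((a m) ^ i * β m * Complex.exp (a m * x)
          + (b m) ^ i * d m * Complex.exp (b m * x))).re := by
    intro i
    rw [hg', iter_formula (Finset.range (k+1)) a b β d i]
  -- the complex sums vanish for 1 ≤ i ≤ 4k
  have hS : ∀ i : ℕ, 1 ≤ i → i ≤ 4 * k →
      (∑ m ∈ Finset.range (k + 1),
        ((a m) ^ i * β m * Complex.exp (a m * x)
          + (b m) ^ i * d m * Complex.exp (b m * x))) = 0 := by
    intro i h1 h2
    have h0 := hcon i h1 h2
    rw [hiter i] at h0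
    have hsplit : (∑ m ∈ Finset.range (k + 1),
        ((a m) ^ i * β m * Complex.exp (a m * x)
          + (b m) ^ i * d m * Complex.exp (b m * x)))
        = (∑ m ∈ Finset.range (k + 1), (a m) ^ i * β m * Complex.exp (a m * x))
          + (starRingEnd ℂ) (∑ m ∈ Finset.range (k + 1),
              (a m) ^ i * β m * Complex.exp (a m * x)) := by
      rw [Finset.sum_add_distrib, map_sum]
      congr 1
      apply Finset.sum_congr rfl
      intro m _
      have h1 : (starRingEnd ℂ) (a m) = b m := by
        simp [ha, hb, map_mul, Complex.conj_I, Complex.conj_natCast]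
      simp only [map_mul, map_pow, ← Complex.exp_conj, Complex.conj_ofReal, h1, hd]
    rw [hsplit] at h0 ⊢
    rw [Complex.add_conj] at h0 ⊢
    rw [Complex.ofReal_re] at h0
    rw [h0]
    exact Complex.ofReal_zero
  -- set up the Vandermonde system
  set w : Fin (2 * k) → ℂ := fun s =>
    if (s : ℕ) < k then Complex.I * (((s : ℕ) : ℂ) + 1)
    else -(Complex.I * ((((s : ℕ) - k : ℕ) : ℂ) + 1)) with hw
  set p : Fin (2 * k) → ℂ := fun s =>
    if (s : ℕ) < k then β ((s : ℕ) + 1) * Complex.exp (a ((s : ℕ) + 1) * x)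
    else d (((s : ℕ) - k) + 1) * Complex.exp (b (((s : ℕ) - k) + 1) * x) with hp
  set u : Fin (2 * k) → ℂ := fun s => w s * p s with hu
  have hwinj : Function.Injective w := by
    intro s t hst
    have hs := s.isLt
    have ht := t.isLt
    simp only [hw] at hst
    apply Fin.ext
    by_cases h1 : (s : ℕ) < k <;> by_cases h2 : (t : ℕ) < k <;>
      simp only [h1, h2, if_true, if_false, if_pos, if_neg] at hst
    · have := mul_left_cancel₀ Complex.I_ne_zero hst
      have : ((s : ℕ) : ℂ) = ((t : ℕ) : ℂ) := by linear_combination this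
      exact_mod_cast this
    · exfalso
      have him := congrArg Complex.im hst
      simp at him
      have h1' : (0:ℝ) ≤ ((s : ℕ) : ℝ) := by positivity
      have h2' : (0:ℝ) ≤ (((t : ℕ) - k : ℕ) : ℝ) := by positivity
      linarith
    · exfalso
      have him := congrArg Complex.im hst
      simp at him
      have h1' : (0:ℝ) ≤ (((s : ℕ) - k : ℕ) : ℝ) := by positivity
      have h2' : (0:ℝ) ≤ ((t : ℕ) : ℝ) := by positivity
      linarith
    · have hst' := neg_injective hst
      have := mul_left_cancel₀ Complex.I_ne_zero hst'
      have : (((s : ℕ) - k : ℕ) : ℂ) = (((t : ℕ) - k : ℕ) : ℂ) := by linear_combination this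
      have : (s : ℕ) - k = (t : ℕ) - k := by exact_mod_cast this
      omega
  -- the Vandermonde equations
  have heq : ∀ i : Fin (2 * k), (∑ j, u j * w j ^ (i : ℕ)) = 0 := by
    intro i
    have hle1 : 1 ≤ (i : ℕ) + 1 := le_add_self
    have hle2 : (i : ℕ) + 1 ≤ 4 * k := by have := i.isLt; omega
    have hSi := hS ((i : ℕ) + 1) hle1 hle2
    set A : ℕ → ℂ := fun m => (a m) ^ ((i : ℕ) + 1) * β m * Complex.exp (a m * x) with hA
    set B : ℕ → ℂ := fun m => (b m) ^ ((i : ℕ) + 1) * d m * Complex.exp (b m * x) with hB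
    set F : ℕ → ℂ := fun t => if t < k then A (t + 1) else B (t - k + 1) with hF
    have hterm : ∀ j : Fin (2 * k), u j * w j ^ (i : ℕ) = F (j : ℕ) := by
      intro j
      by_cases hc : (j : ℕ) < k
      · have haw : a ((j : ℕ) + 1) = Complex.I * (((j : ℕ) : ℂ) + 1) := by
          simp only [ha]; push_cast; ring
        simp only [hu, hw, hp, hF, hA, if_pos hc, haw]
        ring
      · have hbw : b ((j : ℕ) - k + 1) = -(Complex.I * ((((j : ℕ) - k : ℕ) : ℂ) + 1)) := by
          simp only [hb]; push_cast; ring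
        simp only [hu, hw, hp, hF, hB, if_neg hc, hbw]
        ring
    have hzero : A 0 + B 0 = 0 := by simp [hA, hB, ha, hb]
    calc (∑ j, u j * w j ^ (i : ℕ))
        = ∑ j : Fin (2 * k), F (j : ℕ) := Finset.sum_congr rfl fun j _ => hterm j
      _ = ∑ t ∈ Finset.range (2 * k), F t := Fin.sum_univ_eq_sum_range F (2 * k)
      _ = ∑ t ∈ Finset.range (k + k), F t := by rw [two_mul]
      _ = (∑ t ∈ Finset.range k, F t) + ∑ t ∈ Finset.range k, F (k + t) :=
          Finset.sum_range_add F k k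
      _ = (∑ t ∈ Finset.range k, A (t + 1)) + ∑ t ∈ Finset.range k, B (t + 1) := by
          congr 1
          · exact Finset.sum_congr rfl fun t ht => by
              rw [hF]; simp only [if_pos (Finset.mem_range.mp ht)]
          · exact Finset.sum_congr rfl fun t ht => by
              rw [hF]
              simp only [Nat.add_sub_cancel_left,
                if_neg (by omega : ¬ k + t < k)]
      _ = ∑ t ∈ Finset.range k, (A (t + 1) + B (t + 1)) :=
          (Finset.sum_add_distrib).symm
      _ = (∑ m ∈ Finset.range k, (A (m + 1) + B (m + 1))) + (A 0 + B 0) := by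
          rw [hzero, add_zero]
      _ = ∑ m ∈ Finset.range (k + 1), (A m + B m) := (Finset.sum_range_succ' (fun m => A m + B m) k).symm
      _ = 0 := hSi
  have hu0 : u = 0 := Matrix.eq_zero_of_forall_pow_sum_mul_pow_eq_zero hwinj heq
  obtain ⟨j, hj1, hj2, hjne⟩ := hβ
  have hjlt : j - 1 < 2 * k := by omega
  have := congrFun hu0 ⟨j - 1, hjlt⟩
  simp only [hu, hw, hp, Pi.zero_apply] at this
  have hjk : j - 1 < k := by omega
  rw [if_pos hjk, if_pos hjk] at this
  have hj1' : j - 1 + 1 = j := by omega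
  rw [hj1'] at this
  rcases mul_eq_zero.mp this with h | h
  · rcases mul_eq_zero.mp h with h' | h'
    · exact Complex.I_ne_zero h'
    · have : ((j - 1 : ℕ) : ℂ) + 1 ≠ 0 := by
        have : (0:ℝ) ≤ ((j - 1 : ℕ) : ℝ) := by positivity
        intro hc
        have := congrArg Complex.re hc
        simp at this
        linarith
      exact this h'
  · rcases mul_eq_zero.mp h with h' | h'
    · exact hjne h'
    · exact Complex.exp_ne_zero _ h'
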